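/- In Ruleset C' of Quantum Nim (a single classical move is legal iff it is legal in every realisation in which the mover still has at least one classical move), the Grundy value of a superposition of single Nim heaps with heap sizes S and maximum k is: 0 if S = {1,2} or S = {0,1,2}; 1 if k = 1; k−1 if k−1 ∈ S (and S is not one of the two exceptions); and k otherwise. -/
import Mathlib


namespace QGame

variable {Pos Move : Type} [DecidableEq Pos]

/-- Result of applying the superposed move `M` (a finite set of classical move
labels) to the superposition `S` of classical positions: the set of all results
of a classical move of `M` applied to a realisation where it is legal. -/
def qApply (Γ : Pos → Move → Option Pos) (S : Finset Pos) (M : Finset Move) :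
    Finset Pos :=
  S.biUnion fun G => M.biUnion fun m => (Γ G m).toFinset

/-- The classical move `m` is legal in at least one realisation of `S`. -/
def MoveLegal (Γ : Pos → Move → Option Pos) (S : Finset Pos) (m : Move) : Prop :=
  ∃ G ∈ S, (Γ G m).isSome

/-- Basic legality of a Q-move: nonempty, and each classical move is legal
in at least one realisation. -/
def QBase (Γ : Pos → Move → Option Pos) (S : Finset Pos) (M : Finset Move) : Prop :=
  M.Nonempty ∧ ∀ m ∈ M, MoveLegal Γ S m

/-- Ruleset A : superpositions of at least two distinct classical moves. -/
def QLegalA (Γ : Pos → Move → Option Pos) (S : Finset Pos) (M : Finset Move) : Prop :=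
  QBase Γ S M ∧ 2 ≤ M.card

/-- Ruleset B : as A, except a lone classical move may be played when it is the
only legal classical move over all realisations. -/
def QLegalB (Γ : Pos → Move → Option Pos) (S : Finset Pos) (M : Finset Move) : Prop :=
  QBase Γ S M ∧ (2 ≤ M.card ∨ ∀ m, MoveLegal Γ S m → m ∈ M)

/-- Ruleset C : a lone classical move must be legal in every realisation. -/
def QLegalC (Γ : Pos → Move → Option Pos) (S : Finset Pos) (M : Finset Move) : Prop :=
  QBase Γ S M ∧ (2 ≤ M.card ∨ ∀ G ∈ S, ∀ m ∈ M, (Γ G m).isSome)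

/-- A single classical move is C'-allowed: legal in every realisation where the
mover still has at least one classical move. -/
def SingleLegalC' (Γ : Pos → Move → Option Pos) (S : Finset Pos) (m : Move) : Prop :=
  ∀ G ∈ S, (∃ m', (Γ G m').isSome) → (Γ G m).isSome

/-- Ruleset C'. -/
def QLegalC' (Γ : Pos → Move → Option Pos) (S : Finset Pos) (M : Finset Move) : Prop :=
  QBase Γ S M ∧ (2 ≤ M.card ∨ ∀ m ∈ M, SingleLegalC' Γ S m)

/-- Ruleset D : any nonempty superposition of legal classical moves. -/
def QLegalD (Γ : Pos → Move → Option Pos) (S : Finset Pos) (M : Finset Move) : Prop :=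
  QBase Γ S M

def optA (Γ : Pos → Move → Option Pos) (S : Finset Pos) : Set (Finset Pos) :=
  {T | ∃ M, QLegalA Γ S M ∧ T = qApply Γ S M}
def optB (Γ : Pos → Move → Option Pos) (S : Finset Pos) : Set (Finset Pos) :=
  {T | ∃ M, QLegalB Γ S M ∧ T = qApply Γ S M}
def optC (Γ : Pos → Move → Option Pos) (S : Finset Pos) : Set (Finset Pos) :=
  {T | ∃ M, QLegalC Γ S M ∧ T = qApply Γ S M}
def optC' (Γ : Pos → Move → Option Pos) (S : Finset Pos) : Set (Finset Pos) :=
  {T | ∃ M, QLegalC' Γ S M ∧ T = qApply Γ S M}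
def optD (Γ : Pos → Move → Option Pos) (S : Finset Pos) : Set (Finset Pos) :=
  {T | ∃ M, QLegalD Γ S M ∧ T = qApply Γ S M}

/-- `NPos opt p` : under normal play, the player to move from `p` wins,
i.e. there is a move to a position all of whose options are again `NPos`
(that is, to a previous-player-win position). -/
inductive NPos {α : Type*} (opt : α → Set α) : α → Prop where
  | mk (p q : α) (hq : q ∈ opt p) (h : ∀ r, r ∈ opt q → NPos opt r) :
      NPos opt p

/-- `PPos opt p` : `p` is a previous-player win (the second player wins)
under normal play: every option is a next-player win. -/
def PPos {α : Type*} (opt : α → Set α) (p : α) : Prop :=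
  ∀ q ∈ opt p, NPos opt q

/-- Options of the sum of a game with a classical Nim heap: move in the game
component, or decrease the heap component. -/
def sumNimOpt {α : Type*} (opt : α → Set α) : α × ℕ → Set (α × ℕ) :=
  fun x => {y | (y.1 ∈ opt x.1 ∧ y.2 = x.2) ∨ (y.1 = x.1 ∧ y.2 < x.2)}

/-- `HasGrundy opt p n` : position `p` has Sprague–Grundy value `n` (the value
obtained by the mex rule). By the Sprague–Grundy theorem this holds iff the sum
of `p` with a Nim heap of `n` tokens is a previous-player win. -/
def HasGrundy {α : Type*} (opt : α → Set α) (p : α) (n : ℕ) : Prop :=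
  PPos (sumNimOpt opt) (p, n)

/-- Classical single-heap Nim: from a heap of `n` tokens, the move labelled `x`
removes `x` tokens, legal when `1 ≤ x ≤ n`. -/
def nimΓ : ℕ → ℕ → Option ℕ := fun n x =>
  if 1 ≤ x ∧ x ≤ n then some (n - x) else none

end QGame

namespace QGame



/-- The value formula. -/
def gval (S : Finset ℕ) : ℕ :=
  if S = ({1, 2} : Finset ℕ) ∨ S = ({0, 1, 2} : Finset ℕ) then 0
  else if S.sup id = 1 then 1
  else if S.sup id - 1 ∈ S then S.sup id - 1
  else S.sup id

lemma nim_isSome {n x : ℕ} : (nimΓ n x).isSome ↔ 1 ≤ x ∧ x ≤ n := by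
  simp only [nimΓ]; split_ifs with h <;> simp [h]

lemma nim_eq_some {n x p : ℕ} : nimΓ n x = some p ↔ 1 ≤ x ∧ x ≤ n ∧ n - x = p := by
  simp only [nimΓ]; split_ifs with h <;> simp_all

lemma mem_qApply_nim {S M : Finset ℕ} {p : ℕ} :
    p ∈ qApply nimΓ S M ↔ ∃ n ∈ S, ∃ x ∈ M, 1 ≤ x ∧ x ≤ n ∧ n - x = p := by
  simp only [qApply, Finset.mem_biUnion, Option.mem_toFinset, Option.mem_def, nim_eq_some]

lemma moveLegal_nim {S : Finset ℕ} {x : ℕ} :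
    MoveLegal nimΓ S x ↔ ∃ n ∈ S, 1 ≤ x ∧ x ≤ n := by
  simp only [MoveLegal, nim_isSome]

lemma singleLegal_nim {S : Finset ℕ} {x : ℕ} :
    SingleLegalC' nimΓ S x ↔ ∀ n ∈ S, 1 ≤ n → (1 ≤ x ∧ x ≤ n) := by
  simp only [SingleLegalC', nim_isSome]
  constructor
  · intro h n hn hn1
    exact h n hn ⟨1, le_refl 1, hn1⟩
  · intro h n hn hex
    obtain ⟨m', hm1, hm2⟩ := hex
    exact h n hn (le_trans hm1 hm2)

lemma sup_mem {S : Finset ℕ} (hS : S.Nonempty) : S.sup id ∈ S := by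
  obtain ⟨n, hn, he⟩ := Finset.exists_mem_eq_sup S hS id
  simpa [he] using hn

lemma le_sup_of_mem {S : Finset ℕ} {n : ℕ} (h : n ∈ S) : n ≤ S.sup id :=
  Finset.le_sup (f := id) h

lemma gval_le_sup (S : Finset ℕ) : gval S ≤ S.sup id := by
  unfold gval
  split_ifs with h1 h2 h3
  · rcases h1 with h | h <;> subst h <;> simp
  · omega
  · omega
  · omega



lemma gval_singleton_zero : gval ({0} : Finset ℕ) = 0 := by decide
lemma gval_pair01 : gval ({0, 1} : Finset ℕ) = 1 := by decide
lemma gval_trip012 : gval ({0, 1, 2} : Finset ℕ) = 0 := by decide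

lemma gval_sup_eq_one {T : Finset ℕ} (h : T.sup id = 1) : gval T = 1 := by
  unfold gval
  have h1 : T ≠ ({1,2} : Finset ℕ) := by rintro rfl; simp at h
  have h2 : T ≠ ({0,1,2} : Finset ℕ) := by rintro rfl; revert h; decide
  rw [if_neg (by tauto), if_pos h]

lemma gval_of_pred_not_mem {T : Finset ℕ} (h2 : 2 ≤ T.sup id)
    (hp : T.sup id - 1 ∉ T) (he : ¬(T = ({1,2} : Finset ℕ) ∨ T = ({0,1,2} : Finset ℕ))) :
    gval T = T.sup id := by
  unfold gval
  rw [if_neg he, if_neg (by omega), if_neg hp]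

lemma gval_of_pred_mem {T : Finset ℕ} (h2 : 2 ≤ T.sup id) (hp : T.sup id - 1 ∈ T) :
    gval T = 0 ∨ gval T = T.sup id - 1 := by
  unfold gval
  split_ifs with h1 h2' <;> simp_all

/-- options are nonempty and have strictly smaller sup -/
lemma opt_struct {S T : Finset ℕ} (h : T ∈ optC' nimΓ S) :
    T.Nonempty ∧ T.sup id < S.sup id := by
  obtain ⟨M, ⟨⟨⟨x, hx⟩, hleg⟩, _⟩, rfl⟩ := h
  obtain ⟨n, hn, hx1, hxn⟩ := moveLegal_nim.mp (hleg x hx)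
  have hne : (qApply nimΓ S M).Nonempty :=
    ⟨n - x, mem_qApply_nim.mpr ⟨n, hn, x, hx, hx1, hxn, rfl⟩⟩
  refine ⟨hne, ?_⟩
  have hS1 : 1 ≤ S.sup id := le_trans (le_trans hx1 hxn) (le_sup_of_mem hn)
  have : ∀ p ∈ qApply nimΓ S M, p ≤ S.sup id - 1 := by
    intro p hp
    obtain ⟨n', hn', x', _, hx1', hxn', rfl⟩ := mem_qApply_nim.mp hp
    have := le_sup_of_mem hn'
    omega
  calc (qApply nimΓ S M).sup id ≤ S.sup id - 1 := Finset.sup_le this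
    _ < S.sup id := by omega

/-- elements of qApply are bounded -/
lemma qApply_le {S M : Finset ℕ} {b p : ℕ} (hb : ∀ x ∈ M, ∀ n ∈ S, x ≤ n → n - x ≤ b)
    (hp : p ∈ qApply nimΓ S M) : p ≤ b := by
  obtain ⟨n, hn, x, hx, _, hxn, rfl⟩ := mem_qApply_nim.mp hp
  exact hb x hx n hn hxn

/-- building a legal superposed pair move -/
lemma legal_pair {S : Finset ℕ} (hS : S.Nonempty) {a b : ℕ}
    (ha1 : 1 ≤ a) (hak : a ≤ S.sup id) (hb1 : 1 ≤ b) (hbk : b ≤ S.sup id) (hab : a ≠ b) :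
    QLegalC' nimΓ S {a, b} := by
  have hk := sup_mem hS
  refine ⟨⟨⟨a, by simp⟩, ?_⟩, Or.inl ?_⟩
  · intro m hm
    simp only [Finset.mem_insert, Finset.mem_singleton] at hm
    rcases hm with rfl | rfl <;> exact moveLegal_nim.mpr ⟨S.sup id, hk, by omega⟩
  · rw [Finset.card_pair hab]

lemma legal_triple {S : Finset ℕ} (hS : S.Nonempty) {a b c : ℕ}
    (ha1 : 1 ≤ a) (hak : a ≤ S.sup id) (hb1 : 1 ≤ b) (hbk : b ≤ S.sup id)
    (hc1 : 1 ≤ c) (hck : c ≤ S.sup id) (hab : a ≠ b) (hac : a ≠ c) :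
    QLegalC' nimΓ S {a, b, c} := by
  have hk := sup_mem hS
  refine ⟨⟨⟨a, by simp⟩, ?_⟩, Or.inl ?_⟩
  · intro m hm
    simp only [Finset.mem_insert, Finset.mem_singleton] at hm
    rcases hm with rfl | rfl | rfl <;> exact moveLegal_nim.mpr ⟨S.sup id, hk, by omega⟩
  · calc 2 = ({a, c} : Finset ℕ).card := (Finset.card_pair hac).symm
      _ ≤ ({a, b, c} : Finset ℕ).card := Finset.card_le_card (by
          intro y hy; simp only [Finset.mem_insert, Finset.mem_singleton] at *; tauto)

lemma legal_single {S : Finset ℕ} {x : ℕ} (hx1 : 1 ≤ x)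
    (hex : ∃ n ∈ S, x ≤ n) (hall : ∀ n ∈ S, 1 ≤ n → x ≤ n) :
    QLegalC' nimΓ S {x} := by
  obtain ⟨n, hn, hxn⟩ := hex
  refine ⟨⟨⟨x, by simp⟩, ?_⟩, Or.inr ?_⟩
  · intro m hm
    simp only [Finset.mem_singleton] at hm
    subst hm
    exact moveLegal_nim.mpr ⟨n, hn, hx1, hxn⟩
  · intro m hm
    simp only [Finset.mem_singleton] at hm
    subst hm
    exact singleLegal_nim.mpr fun n' hn' h1 => ⟨hx1, hall n' hn' h1⟩

lemma gval_of_pred_mem' {T : Finset ℕ} (h2 : 2 ≤ T.sup id) (hp : T.sup id - 1 ∈ T)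
    (he : ¬(T = ({1,2} : Finset ℕ) ∨ T = ({0,1,2} : Finset ℕ))) :
    gval T = T.sup id - 1 := by
  unfold gval
  rw [if_neg he, if_neg (by omega), if_pos hp]

lemma mem_optC' {S M : Finset ℕ} (h : QLegalC' nimΓ S M) :
    qApply nimΓ S M ∈ optC' nimΓ S := ⟨M, h, rfl⟩

lemma sup_eq_of {T : Finset ℕ} {v : ℕ} (hv : v ∈ T) (hb : ∀ p ∈ T, p ≤ v) :
    T.sup id = v :=
  le_antisymm (Finset.sup_le hb) (le_sup_of_mem hv)

/-- k = 1 : move to {0}. -/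
lemma constr_c0 {S : Finset ℕ} (hS : S.Nonempty) (hk : S.sup id = 1) :
    ∃ T ∈ optC' nimΓ S, gval T = 0 := by
  have hmem : (1 : ℕ) ∈ S := hk ▸ sup_mem hS
  have hleg : QLegalC' nimΓ S {1} :=
    legal_single le_rfl ⟨1, hmem, le_rfl⟩ (fun n _ h1 => h1)
  refine ⟨_, mem_optC' hleg, ?_⟩
  have : qApply nimΓ S {1} = {0} := by
    ext p
    simp only [mem_qApply_nim, Finset.mem_singleton]
    constructor
    · rintro ⟨n, hn, x, rfl, h1, h2, rfl⟩
      have := le_sup_of_mem hn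
      omega
    · rintro rfl
      exact ⟨1, hmem, 1, rfl, le_rfl, le_rfl, rfl⟩
  rw [this, gval_singleton_zero]

/-- pair move {k-v, k}, v = 1 : reach value 1. -/
lemma constr_c1a {S : Finset ℕ} (hS : S.Nonempty) (hk : 2 ≤ S.sup id) :
    ∃ T ∈ optC' nimΓ S, gval T = 1 := by
  set k := S.sup id with hkdef
  have hkS : k ∈ S := sup_mem hS
  have hleg : QLegalC' nimΓ S {k - 1, k} :=
    legal_pair hS (by omega) (by omega) (by omega) le_rfl (by omega)
  refine ⟨_, mem_optC' hleg, ?_⟩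
  apply gval_sup_eq_one
  apply sup_eq_of
  · exact mem_qApply_nim.mpr ⟨k, hkS, k - 1, by simp, by omega, by omega, by omega⟩
  · intro p hp
    refine qApply_le (fun x hx n hn hxn => ?_) hp
    simp only [Finset.mem_insert, Finset.mem_singleton] at hx
    have := le_sup_of_mem hn
    omega

/-- pair move {k-v, k}, 2 ≤ v ≤ k-1, k-1 ∉ S : reach value v. -/
lemma constr_c1b {S : Finset ℕ} (hS : S.Nonempty) {v : ℕ} (hv2 : 2 ≤ v)
    (hvk : v ≤ S.sup id - 1) (hkm : S.sup id - 1 ∉ S) :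
    ∃ T ∈ optC' nimΓ S, gval T = v := by
  set k := S.sup id with hkdef
  have hkS : k ∈ S := sup_mem hS
  have hk3 : 3 ≤ k := by omega
  have hleg : QLegalC' nimΓ S {k - v, k} :=
    legal_pair hS (by omega) (by omega) (by omega) le_rfl (by omega)
  refine ⟨_, mem_optC' hleg, ?_⟩
  have hbound : ∀ p ∈ qApply nimΓ S {k - v, k}, p ≤ v := by
    intro p hp
    refine qApply_le (fun x hx n hn hxn => ?_) hp
    simp only [Finset.mem_insert, Finset.mem_singleton] at hx
    have := le_sup_of_mem hn
    omega
  have hvT : v ∈ qApply nimΓ S {k - v, k} :=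
    mem_qApply_nim.mpr ⟨k, hkS, k - v, by simp, by omega, by omega, by omega⟩
  have h0T : (0 : ℕ) ∈ qApply nimΓ S {k - v, k} :=
    mem_qApply_nim.mpr ⟨k, hkS, k, by simp, by omega, le_rfl, by omega⟩
  have hsup : (qApply nimΓ S {k - v, k}).sup id = v := sup_eq_of hvT hbound
  have hpred : v - 1 ∉ qApply nimΓ S {k - v, k} := by
    intro hmem
    obtain ⟨n, hn, x, hx, h1, h2, h3⟩ := mem_qApply_nim.mp hmem
    simp only [Finset.mem_insert, Finset.mem_singleton] at hx
    have := le_sup_of_mem hn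
    rcases hx with rfl | rfl
    · have : n = k - 1 := by omega
      exact hkm (this ▸ hn)
    · omega
  have hne : ¬(qApply nimΓ S {k - v, k} = ({1,2} : Finset ℕ) ∨
      qApply nimΓ S {k - v, k} = ({0,1,2} : Finset ℕ)) := by
    rintro (he | he)
    · rw [he] at h0T; exact absurd h0T (by decide)
    · have h012 : (({0,1,2} : Finset ℕ)).sup id = 2 := by decide
      rw [he] at hsup hpred
      have hveq : v = 2 := by omega
      exact hpred (by rw [hveq]; decide)
  have hg := gval_of_pred_not_mem (T := qApply nimΓ S {k - v, k})
    (by rw [hsup]; omega) (by rw [hsup]; exact hpred) hne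
  rw [hg, hsup]

/-- triple move {k-2, k-1, k}, k ≥ 3 : reach {0,1,2}, value 0. -/
lemma constr_c2 {S : Finset ℕ} (hS : S.Nonempty) (hk : 3 ≤ S.sup id) :
    ∃ T ∈ optC' nimΓ S, gval T = 0 := by
  set k := S.sup id with hkdef
  have hkS : k ∈ S := sup_mem hS
  have hleg : QLegalC' nimΓ S {k - 2, k - 1, k} :=
    legal_triple hS (by omega) (by omega) (by omega) (by omega) (by omega) le_rfl
      (by omega) (by omega)
  refine ⟨_, mem_optC' hleg, ?_⟩
  have : qApply nimΓ S {k - 2, k - 1, k} = {0, 1, 2} := by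
    ext p
    simp only [mem_qApply_nim, Finset.mem_insert, Finset.mem_singleton]
    constructor
    · rintro ⟨n, hn, x, hx, h1, h2, rfl⟩
      have := le_sup_of_mem hn
      rcases hx with rfl | rfl | rfl <;> omega
    · rintro (rfl | rfl | rfl)
      · exact ⟨k, hkS, k, by tauto, by omega, le_rfl, by omega⟩
      · exact ⟨k, hkS, k - 1, by tauto, by omega, by omega, by omega⟩
      · exact ⟨k, hkS, k - 2, by tauto, by omega, by omega, by omega⟩
  rw [this, gval_trip012]

/-- k = 2, 1 ∉ S : single move {2} reaches {0}, value 0. -/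
lemma constr_c3 {S : Finset ℕ} (hS : S.Nonempty) (hk : S.sup id = 2) (h1 : (1:ℕ) ∉ S) :
    ∃ T ∈ optC' nimΓ S, gval T = 0 := by
  have h2S : (2 : ℕ) ∈ S := hk ▸ sup_mem hS
  have hleg : QLegalC' nimΓ S {2} := by
    refine legal_single (by omega) ⟨2, h2S, le_rfl⟩ (fun n hn hn1 => ?_)
    have := le_sup_of_mem hn
    rcases Nat.lt_or_ge n 2 with h | h
    · exfalso
      have hn1' : n = 1 := by omega
      exact h1 (hn1' ▸ hn)
    · omega
  refine ⟨_, mem_optC' hleg, ?_⟩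
  have : qApply nimΓ S {2} = {0} := by
    ext p
    simp only [mem_qApply_nim, Finset.mem_singleton]
    constructor
    · rintro ⟨n, hn, x, rfl, hx1, h2, rfl⟩
      have := le_sup_of_mem hn
      omega
    · rintro rfl
      exact ⟨2, h2S, 2, rfl, by omega, le_rfl, rfl⟩
  rw [this, gval_singleton_zero]

/-- triple move {k-1-v, k-1, k}, k-1 ∈ S, 2 ≤ v ≤ k-2 : reach value v. -/
lemma constr_c5 {S : Finset ℕ} (hS : S.Nonempty) {v : ℕ} (hv2 : 2 ≤ v)
    (hvk : v ≤ S.sup id - 2) (hkm : S.sup id - 1 ∈ S) :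
    ∃ T ∈ optC' nimΓ S, gval T = v := by
  set k := S.sup id with hkdef
  have hkS : k ∈ S := sup_mem hS
  have hk4 : 4 ≤ k := by omega
  have hleg : QLegalC' nimΓ S {k - 1 - v, k - 1, k} :=
    legal_triple hS (by omega) (by omega) (by omega) (by omega) (by omega) le_rfl
      (by omega) (by omega)
  refine ⟨_, mem_optC' hleg, ?_⟩
  set M : Finset ℕ := {k - 1 - v, k - 1, k} with hM
  have hbound : ∀ p ∈ qApply nimΓ S M, p ≤ v + 1 := by
    intro p hp
    refine qApply_le (fun x hx n hn hxn => ?_) hp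
    simp only [hM, Finset.mem_insert, Finset.mem_singleton] at hx
    have := le_sup_of_mem hn
    omega
  have hvT : v + 1 ∈ qApply nimΓ S M :=
    mem_qApply_nim.mpr ⟨k, hkS, k - 1 - v, by simp [hM], by omega, by omega, by omega⟩
  have hvT' : v ∈ qApply nimΓ S M :=
    mem_qApply_nim.mpr ⟨k - 1, hkm, k - 1 - v, by simp [hM], by omega, by omega, by omega⟩
  have hsup : (qApply nimΓ S M).sup id = v + 1 := sup_eq_of hvT hbound
  have := gval_of_pred_mem' (T := qApply nimΓ S M) (by omega)
    (by rw [hsup]; simpa using hvT')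
    (by
      rintro (he | he)
      · have : (qApply nimΓ S M).sup id = 2 := by rw [he]; decide
        omega
      · have : (qApply nimΓ S M).sup id = 2 := by rw [he]; decide
        omega)
  rw [this, hsup]
  omega

lemma exception_of {S : Finset ℕ} (hS : S.Nonempty) (hk : S.sup id = 2) (h1 : (1:ℕ) ∈ S) :
    S = ({1,2} : Finset ℕ) ∨ S = ({0,1,2} : Finset ℕ) := by
  have h2 : (2:ℕ) ∈ S := hk ▸ sup_mem hS
  have hb : ∀ n ∈ S, n ≤ 2 := fun n hn => hk ▸ le_sup_of_mem hn
  by_cases h0 : (0:ℕ) ∈ S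
  · right
    ext p
    simp only [Finset.mem_insert, Finset.mem_singleton]
    constructor
    · intro hp; have := hb p hp; omega
    · rintro (rfl | rfl | rfl) <;> assumption
  · left
    ext p
    simp only [Finset.mem_insert, Finset.mem_singleton]
    constructor
    · intro hp
      have := hb p hp
      have : p ≠ 0 := fun h => h0 (h ▸ hp)
      omega
    · rintro (rfl | rfl) <;> assumption

lemma gval_all (S : Finset ℕ) (hS : S.Nonempty) :
    ∀ v < gval S, ∃ T ∈ optC' nimΓ S, gval T = v := by
  intro v hv
  by_cases hexc : S = ({1,2} : Finset ℕ) ∨ S = ({0,1,2} : Finset ℕ)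
  · rw [gval, if_pos hexc] at hv; omega
  by_cases hk1 : S.sup id = 1
  · rw [gval, if_neg hexc, if_pos hk1] at hv
    have hv0 : v = 0 := by omega
    subst hv0
    exact constr_c0 hS hk1
  by_cases hkm : S.sup id - 1 ∈ S
  · rw [gval, if_neg hexc, if_neg hk1, if_pos hkm] at hv
    have hk2 : S.sup id ≠ 2 := by
      intro h
      exact hexc (exception_of hS h (by rw [h] at hkm; exact hkm))
    have hk3 : 3 ≤ S.sup id := by omega
    rcases Nat.lt_or_ge v 2 with hv2 | hv2
    · rcases Nat.lt_or_ge v 1 with hv1 | hv1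
      · have hv0 : v = 0 := by omega
        subst hv0
        exact constr_c2 hS hk3
      · have hv1' : v = 1 := by omega
        subst hv1'
        exact constr_c1a hS (by omega)
    · exact constr_c5 hS hv2 (by omega) hkm
  · rw [gval, if_neg hexc, if_neg hk1, if_neg hkm] at hv
    have hk2 : 2 ≤ S.sup id := by
      rcases Nat.eq_zero_or_pos (S.sup id) with h | h
      · exfalso
        obtain ⟨n, hn⟩ := hS
        have hle := le_sup_of_mem hn
        apply hkm
        have hn0 : n = S.sup id - 1 := by omega
        exact hn0 ▸ hn
      · omega
    rcases Nat.lt_or_ge v 2 with hv2 | hv2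
    · rcases Nat.lt_or_ge v 1 with hv1 | hv1
      · have hv0 : v = 0 := by omega
        subst hv0
        rcases Nat.lt_or_ge (S.sup id) 3 with h3 | h3
        · exact constr_c3 hS (by omega) (by
            intro h1S
            apply hkm
            have : S.sup id - 1 = 1 := by omega
            rw [this]; exact h1S)
        · exact constr_c2 hS h3
      · have hv1' : v = 1 := by omega
        subst hv1'
        exact constr_c1a hS hk2
    · exact constr_c1b hS hv2 (by omega) hkm

lemma gval_exc (S : Finset ℕ) (hS : S.Nonempty) :
    ∀ T ∈ optC' nimΓ S, gval T ≠ gval S := by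
  intro T hT
  obtain ⟨hTne, hTsup⟩ := opt_struct hT
  by_cases hexc : S = ({1,2} : Finset ℕ) ∨ S = ({0,1,2} : Finset ℕ)
  · have hgS : gval S = 0 := by rw [gval, if_pos hexc]
    rw [hgS]
    have hsupS : S.sup id = 2 := by rcases hexc with rfl | rfl <;> decide
    have h1S : (1:ℕ) ∈ S := by rcases hexc with rfl | rfl <;> decide
    have h2S : (2:ℕ) ∈ S := hsupS ▸ sup_mem hS
    obtain ⟨M, ⟨⟨hMne, hleg⟩, hsingle⟩, rfl⟩ := hT
    have h1M : (1:ℕ) ∈ M := by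
      by_contra h1M
      have hMeq : M = {2} := by
        apply Finset.eq_singleton_iff_nonempty_unique_mem.mpr
        refine ⟨hMne, fun x hx => ?_⟩
        obtain ⟨n, hn, hx1, hxn⟩ := moveLegal_nim.mp (hleg x hx)
        have := le_sup_of_mem hn
        have hxne : x ≠ 1 := fun h => h1M (h ▸ hx)
        omega
      rcases hsingle with hcard | hsl
      · rw [hMeq] at hcard; simp at hcard
      · have := (singleLegal_nim.mp (hsl 2 (by rw [hMeq]; exact Finset.mem_singleton_self 2)))
          1 h1S le_rfl
        omega
    have h1T : (1:ℕ) ∈ qApply nimΓ S M :=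
      mem_qApply_nim.mpr ⟨2, h2S, 1, h1M, le_rfl, by omega, rfl⟩
    have hb : ∀ p ∈ qApply nimΓ S M, p ≤ 1 := by
      intro p hp
      obtain ⟨n, hn, x, hx, hx1, hxn, rfl⟩ := mem_qApply_nim.mp hp
      have := le_sup_of_mem hn
      omega
    rw [gval_sup_eq_one (sup_eq_of h1T hb)]
    omega
  by_cases hk1 : S.sup id = 1
  · have hgS : gval S = 1 := by rw [gval, if_neg hexc, if_pos hk1]
    rw [hgS]
    have := gval_le_sup T
    omega
  by_cases hkm : S.sup id - 1 ∈ S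
  · have hgS : gval S = S.sup id - 1 := by rw [gval, if_neg hexc, if_neg hk1, if_pos hkm]
    rw [hgS]
    have hk0 : S.sup id ≠ 0 := by omega
    have hk2 : S.sup id ≠ 2 := by
      intro h
      exact hexc (exception_of hS h (by rw [h] at hkm; exact hkm))
    have hk3 : 3 ≤ S.sup id := by omega
    have hkS : S.sup id ∈ S := sup_mem hS
    obtain ⟨M, ⟨⟨hMne, hleg⟩, hsingle⟩, rfl⟩ := hT
    by_cases h1M : (1:ℕ) ∈ M
    · have ha : S.sup id - 1 ∈ qApply nimΓ S M :=
        mem_qApply_nim.mpr ⟨S.sup id, hkS, 1, h1M, le_rfl, by omega, rfl⟩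
      have hpr : S.sup id - 2 ∈ qApply nimΓ S M :=
        mem_qApply_nim.mpr ⟨S.sup id - 1, hkm, 1, h1M, le_rfl, by omega, by omega⟩
      have hb : ∀ p ∈ qApply nimΓ S M, p ≤ S.sup id - 1 := by
        intro p hp
        have := le_sup_of_mem hp
        omega
      have hsupT : (qApply nimΓ S M).sup id = S.sup id - 1 := sup_eq_of ha hb
      rcases gval_of_pred_mem (T := qApply nimΓ S M) (by omega) (by
          rw [hsupT]
          have he : S.sup id - 1 - 1 = S.sup id - 2 := by omega
          rw [he]; exact hpr) with h | h
      · omega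
      · rw [h, hsupT]; omega
    · have hb : ∀ p ∈ qApply nimΓ S M, p ≤ S.sup id - 2 := by
        intro p hp
        obtain ⟨n, hn, x, hx, hx1, hxn, rfl⟩ := mem_qApply_nim.mp hp
        have := le_sup_of_mem hn
        have hxne : x ≠ 1 := fun h => h1M (h ▸ hx)
        omega
      have h1 : (qApply nimΓ S M).sup id ≤ S.sup id - 2 := Finset.sup_le hb
      have h2 := gval_le_sup (qApply nimΓ S M)
      omega
  · have hgS : gval S = S.sup id := by rw [gval, if_neg hexc, if_neg hk1, if_neg hkm]
    rw [hgS]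
    have := gval_le_sup T
    omega

lemma main_grundy : ∀ (k : ℕ) (S : Finset ℕ), S.Nonempty → S.sup id ≤ k →
    HasGrundy (optC' nimΓ) S (gval S) := by
  intro k
  induction k using Nat.strong_induction_on with
  | _ k ih =>
    intro S hS hk
    intro q hq
    simp only [sumNimOpt, Set.mem_setOf_eq] at hq
    obtain ⟨T, n⟩ := q
    rcases hq with ⟨hT, hn⟩ | ⟨hTS, hn⟩
    · simp only at hT hn
      subst hn
      obtain ⟨hTne, hTsup⟩ := opt_struct hT
      have hne := gval_exc S hS T hT
      rcases Nat.lt_or_ge (gval T) (gval S) with hlt | hge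
      · refine NPos.mk _ (T, gval T) (Or.inr ⟨rfl, hlt⟩) ?_
        intro r hr
        exact ih (T.sup id) (lt_of_lt_of_le hTsup hk) T hTne le_rfl r hr
      · have hgt : gval S < gval T := lt_of_le_of_ne hge (fun h => hne h.symm)
        obtain ⟨T', hT', hgT'⟩ := gval_all T hTne (gval S) hgt
        obtain ⟨hT'ne, hT'sup⟩ := opt_struct hT'
        refine NPos.mk _ (T', gval S) (Or.inl ⟨hT', rfl⟩) ?_
        intro r hr
        have := ih (T'.sup id) (by omega) T' hT'ne le_rfl
        rw [hgT'] at this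
        exact this r hr
    · simp only at hTS hn
      subst hTS
      obtain ⟨T', hT', hgT'⟩ := gval_all T hS n hn
      obtain ⟨hT'ne, hT'sup⟩ := opt_struct hT'
      refine NPos.mk _ (T', n) (Or.inl ⟨hT', rfl⟩) ?_
      intro r hr
      have := ih (T'.sup id) (by omega) T' hT'ne le_rfl
      rw [hgT'] at this
      exact this r hr

end QGame

namespace QGame

/-- In Ruleset C' of Quantum Nim, the Grundy value of a
superposition `S` of single Nim heaps with maximum `k` is `0` for the two
exceptions `S = {1,2}` and `S = {0,1,2}`, `1` if `k = 1`, `k - 1` if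
`k - 1 ∈ S`, and `k` otherwise. -/
theorem rulesetC'_single_heap_value (S : Finset ℕ) (hS : S.Nonempty) (k : ℕ)
    (hmax : S.max' hS = k) :
    HasGrundy (optC' nimΓ) S
      (if S = ({1, 2} : Finset ℕ) ∨ S = ({0, 1, 2} : Finset ℕ) then 0
       else if k = 1 then 1
       else if k - 1 ∈ S then k - 1
       else k) := by
  have hk' : k = S.sup id := by
    rw [← hmax, Finset.max'_eq_sup', Finset.sup'_eq_sup]
  subst hk'
  exact main_grundy (S.sup id) S hS le_rfl

end QGame
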